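/- Every rewrite step of the system R∖ on extended patterns preserves ground semantics: if p rewrites in one step to p' with respect to R∖, then ⟦p⟧ = ⟦p'⟧. -/
import Mathlib


/-- A constructor signature: a type of constructor symbols with arities. -/
structure Sig where
  C : Type
  ar : C → ℕ

/-- Values: ground constructor terms over the signature `S`. -/
inductive Val (S : Sig) : Type where
  | mk : (c : S.C) → (Fin (S.ar c) → Val S) → Val S

/-- Extended patterns. -/
inductive Pat (S : Sig) : Type where
  | var : ℕ → Pat S
  | cons : (c : S.C) → (Fin (S.ar c) → Pat S) → Pat S
  | plus : Pat S → Pat S → Pat S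
  | minus : Pat S → Pat S → Pat S
  | bot : Pat S

namespace Pat

variable {S : Sig}

/-- Variables occurring in a pattern. -/
def vars : Pat S → Set ℕ
  | var x => {x}
  | cons _ ps => ⋃ i, vars (ps i)
  | plus p q => vars p ∪ vars q
  | minus p q => vars p ∪ vars q
  | bot => ∅

/-- Linearity of extended patterns. -/
inductive Linear : Pat S → Prop where
  | var (x : ℕ) : Linear (var x)
  | cons (c : S.C) (ps : Fin (S.ar c) → Pat S) :
      (∀ i, Linear (ps i)) →
      (∀ i j, i ≠ j → Disjoint (vars (ps i)) (vars (ps j))) →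
      Linear (cons c ps)
  | plus {p q : Pat S} : Linear p → Linear q → Linear (plus p q)
  | minus {p q : Pat S} : Linear p → Linear q → Disjoint (vars p) (vars q) →
      Linear (minus p q)
  | bot : Linear bot

/-- Ground semantics of extended patterns. -/
def sem : Pat S → Set (Val S)
  | var _ => Set.univ
  | cons c ps => {v | ∃ vs : Fin (S.ar c) → Val S, v = Val.mk c vs ∧ ∀ i, vs i ∈ sem (ps i)}
  | plus p q => sem p ∪ sem q
  | minus p q => sem p \ sem q
  | bot => ∅

/-- The (extended) instance relation: `Matches p v` means pattern `p` matches value `v`. -/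
def Matches : Pat S → Val S → Prop
  | var _, _ => True
  | cons c ps, v => ∃ vs : Fin (S.ar c) → Val S, v = Val.mk c vs ∧ ∀ i, Matches (ps i) (vs i)
  | plus p q, v => Matches p v ∨ Matches q v
  | minus p q, v => Matches p v ∧ ¬ Matches q v
  | bot, _ => False

/-- Additive patterns: extended patterns containing no complement `∖`. -/
inductive Additive : Pat S → Prop where
  | var (x : ℕ) : Additive (var x)
  | cons (c : S.C) (ps : Fin (S.ar c) → Pat S) :
      (∀ i, Additive (ps i)) → Additive (cons c ps)
  | plus {p q : Pat S} : Additive p → Additive q → Additive (plus p q)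
  | bot : Additive bot

/-- Patterns containing no `⊥`. A pattern is *pure additive* if it is
`Additive` and `BotFree`. -/
inductive BotFree : Pat S → Prop where
  | var (x : ℕ) : BotFree (var x)
  | cons (c : S.C) (ps : Fin (S.ar c) → Pat S) :
      (∀ i, BotFree (ps i)) → BotFree (cons c ps)
  | plus {p q : Pat S} : BotFree p → BotFree q → BotFree (plus p q)
  | minus {p q : Pat S} : BotFree p → BotFree q → BotFree (minus p q)

/-- The sum `p₁ + ⋯ + pₙ` of a list of patterns (`⊥` for the empty list). -/
def sumList : List (Pat S) → Pat S
  | [] => bot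
  | [p] => p
  | p :: q :: r => plus p (sumList (q :: r))

variable [Fintype S.C]

/-- The right-hand side of rule (M6): `Σ_{c ∈ C} c(z₁,…,z_m) ∖ g(t₁,…,tₙ)`,
where the fresh variables are `z i = fv i`. -/
noncomputable def sumVM (fv : ℕ → ℕ) (g : S.C) (ts : Fin (S.ar g) → Pat S) : Pat S :=
  sumList ((Finset.univ : Finset S.C).toList.map fun c =>
    minus (cons c fun i => var (fv i)) (cons g ts))

/-- One step of the rewriting system `R∖` of Figure 1 (closed under contexts).
`fv` enumerates the fresh variables used by rule (M6). -/
inductive Step (fv : ℕ → ℕ) : Pat S → Pat S → Prop where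
  | addL {v : Pat S} : Additive v → Step fv (plus bot v) v
  | addR {v : Pat S} : Additive v → Step fv (plus v bot) v
  | empty {c : S.C} {ps : Fin (S.ar c) → Pat S} (i : Fin (S.ar c)) :
      (∀ j, Additive (ps j)) → ps i = bot → Step fv (cons c ps) bot
  | dist {c : S.C} {ps : Fin (S.ar c) → Pat S} (i : Fin (S.ar c)) {u w : Pat S} :
      (∀ j, Additive (ps j)) → ps i = plus u w →
      Step fv (cons c ps)
        (plus (cons c (Function.update ps i u)) (cons c (Function.update ps i w)))
  | minusMV {v : Pat S} {x : ℕ} : Additive v → Step fv (minus v (var x)) bot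
  | minusMB {v : Pat S} : Additive v → Step fv (minus v bot) v
  | minusMP {w v1 v2 : Pat S} : Additive w → Additive v1 → Additive v2 →
      Step fv (minus w (plus v1 v2)) (minus (minus w v1) v2)
  | minusVM {x : ℕ} {g : S.C} {ts : Fin (S.ar g) → Pat S} :
      (∀ j, Additive (ts j)) → (∀ j, BotFree (ts j)) →
      Step fv (minus (var x) (cons g ts)) (sumVM fv g ts)
  | minusBM {g : S.C} {vs : Fin (S.ar g) → Pat S} :
      (∀ j, Additive (vs j)) → Step fv (minus bot (cons g vs)) bot
  | minusPM {v w : Pat S} {g : S.C} {vs : Fin (S.ar g) → Pat S} :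
      Additive v → Additive w → (∀ j, Additive (vs j)) →
      Step fv (minus (plus v w) (cons g vs))
        (plus (minus v (cons g vs)) (minus w (cons g vs)))
  | minusFF {f : S.C} {vs ts : Fin (S.ar f) → Pat S} :
      (∀ j, Additive (vs j)) → (∀ j, Additive (ts j)) → (∀ j, BotFree (ts j)) →
      Step fv (minus (cons f vs) (cons f ts))
        (sumList (List.ofFn fun i => cons f (Function.update vs i (minus (vs i) (ts i)))))
  | minusFG {f g : S.C} {vs : Fin (S.ar f) → Pat S} {ws : Fin (S.ar g) → Pat S} :
      f ≠ g → (∀ j, Additive (vs j)) → (∀ j, Additive (ws j)) →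
      Step fv (minus (cons f vs) (cons g ws)) (cons f vs)
  | congCons {c : S.C} {ps : Fin (S.ar c) → Pat S} (i : Fin (S.ar c)) {p' : Pat S} :
      Step fv (ps i) p' → Step fv (cons c ps) (cons c (Function.update ps i p'))
  | congPlusL {p p' q : Pat S} : Step fv p p' → Step fv (plus p q) (plus p' q)
  | congPlusR {p q q' : Pat S} : Step fv q q' → Step fv (plus p q) (plus p q')
  | congMinusL {p p' q : Pat S} : Step fv p p' → Step fv (minus p q) (minus p' q)
  | congMinusR {p q q' : Pat S} : Step fv q q' → Step fv (minus p q) (minus p q')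

/-- Patterns containing no sum `+`. -/
inductive PlusFree : Pat S → Prop where
  | var (x : ℕ) : PlusFree (var x)
  | cons (c : S.C) (ps : Fin (S.ar c) → Pat S) :
      (∀ i, PlusFree (ps i)) → PlusFree (cons c ps)
  | minus {p q : Pat S} : PlusFree p → PlusFree q → PlusFree (minus p q)
  | bot : PlusFree bot

/-- Terms in which every `+` symbol has only `+` symbols above it:
sums are pushed to the top. -/
inductive TopPlus : Pat S → Prop where
  | leaf {p : Pat S} : PlusFree p → TopPlus p
  | plus {p q : Pat S} : TopPlus p → TopPlus q → TopPlus (plus p q)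

/-- `q` is a normal form of `p` w.r.t. the relation `R`. -/
def NormalFormOf (R : Pat S → Pat S → Prop) (p q : Pat S) : Prop :=
  Relation.ReflTransGen R p q ∧ ¬ ∃ r, R q r

end Pat

namespace Pat
variable {S : Sig}

lemma mk_inj {c : S.C} {us us' : Fin (S.ar c) → Val S}
    (h : Val.mk c us = Val.mk c us') : us = us' := by
  cases h; rfl

lemma sem_sumList (l : List (Pat S)) : (sumList l).sem = ⋃ p ∈ l, p.sem := by
  induction l with
  | nil => simp [sumList, sem]
  | cons p t ih =>
    cases t with
    | nil => simp [sumList, sem]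
    | cons q r => simp only [sumList, sem, ih, List.mem_cons]; ext v; simp

lemma sem_cons_congr {c : S.C} {ps qs : Fin (S.ar c) → Pat S}
    (h : ∀ i, (ps i).sem = (qs i).sem) : (cons c ps).sem = (cons c qs).sem := by
  simp only [sem]; ext v
  constructor
  · rintro ⟨vs, rfl, hvs⟩; exact ⟨vs, rfl, fun i => (h i) ▸ hvs i⟩
  · rintro ⟨vs, rfl, hvs⟩; exact ⟨vs, rfl, fun i => (h i).symm ▸ hvs i⟩

variable [Fintype S.C]

lemma sem_step {p p' : Pat S} {fv : ℕ → ℕ} (h : Step fv p p') : p.sem = p'.sem := by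
  induction h with
  | addL _ => simp [sem]
  | addR _ => simp [sem]
  | empty i _ hb =>
    simp only [sem]; ext v
    simp only [Set.mem_setOf_eq, Set.mem_empty_iff_false, iff_false]
    rintro ⟨vs, rfl, hvs⟩
    have := hvs i; rw [hb] at this; exact this
  | dist i hadd heq =>
    simp only [sem]; ext v
    constructor
    · rintro ⟨vs, rfl, hvs⟩
      have hi := hvs i; rw [heq] at hi
      rcases hi with hi | hi
      · left; exact ⟨vs, rfl, fun j => by
          rcases eq_or_ne j i with rfl | hj
          · simpa using hi
          · simpa [Function.update_of_ne hj] using hvs j⟩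
      · right; exact ⟨vs, rfl, fun j => by
          rcases eq_or_ne j i with rfl | hj
          · simpa using hi
          · simpa [Function.update_of_ne hj] using hvs j⟩
    · rintro (⟨vs, rfl, hvs⟩ | ⟨vs, rfl, hvs⟩) <;>
      · refine ⟨vs, rfl, fun j => ?_⟩
        rcases eq_or_ne j i with rfl | hj
        · rw [heq]
          first
          | exact Or.inl (by simpa using hvs j)
          | exact Or.inr (by simpa using hvs j)
        · have := hvs j; rwa [Function.update_of_ne hj] at this
  | minusMV _ => simp [sem]
  | minusMB _ => simp [sem]
  | minusMP _ _ _ => simp only [sem]; rw [Set.diff_diff]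
  | @minusVM x g ts _ _ =>
    have h0 : (minus (var x) (cons g ts)).sem = Set.univ \ (cons g ts).sem := rfl
    rw [h0, sumVM, sem_sumList]
    ext v
    constructor
    · rintro ⟨-, hn⟩
      obtain ⟨c, us⟩ := v
      simp only [Set.mem_iUnion, List.mem_map, Finset.mem_toList, Finset.mem_univ, true_and]
      exact ⟨_, ⟨c, rfl⟩, ⟨us, rfl, fun i => Set.mem_univ _⟩, hn⟩
    · intro hv
      simp only [Set.mem_iUnion, List.mem_map, Finset.mem_toList, Finset.mem_univ,
        true_and] at hv
      obtain ⟨q, ⟨c, rfl⟩, h⟩ := hv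
      exact ⟨Set.mem_univ _, h.2⟩
  | minusBM _ => simp [sem]
  | minusPM _ _ _ => simp only [sem]; rw [Set.union_diff_distrib]
  | @minusFF f vs ts _ _ _ =>
    rw [sem_sumList]
    ext v
    simp only [sem, Set.mem_diff, Set.mem_setOf_eq, List.mem_ofFn, Set.mem_iUnion]
    constructor
    · rintro ⟨⟨us, rfl, hus⟩, hn⟩
      have : ∃ i, us i ∉ (ts i).sem := by
        by_contra hall
        push_neg at hall
        exact hn ⟨us, rfl, hall⟩
      obtain ⟨i, hi⟩ := this
      refine ⟨_, ⟨i, rfl⟩, us, rfl, fun j => ?_⟩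
      rcases eq_or_ne j i with rfl | hj
      · simpa [sem] using ⟨hus j, hi⟩
      · simpa [Function.update_of_ne hj] using hus j
    · rintro ⟨-, ⟨i, rfl⟩, us, rfl, hus⟩
      have hi := hus i
      simp only [Function.update_self, sem, Set.mem_diff] at hi
      refine ⟨⟨us, rfl, fun j => ?_⟩, ?_⟩
      · rcases eq_or_ne j i with rfl | hj
        · exact hi.1
        · have := hus j; rwa [Function.update_of_ne hj] at this
      · rintro ⟨ws, hw, hws⟩
        have := mk_inj hw; subst this
        exact hi.2 (hws i)
  | @minusFG f g vs ws hfg _ _ =>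
    simp only [sem]
    ext v
    simp only [Set.mem_diff, Set.mem_setOf_eq, and_iff_left_iff_imp]
    rintro ⟨vs', rfl, -⟩ ⟨ws', hw, -⟩
    cases hw
    exact hfg rfl
  | congCons i _ ih =>
    apply sem_cons_congr
    intro j
    rcases eq_or_ne j i with rfl | hj
    · simpa using ih
    · rw [Function.update_of_ne hj]
  | congPlusL _ ih => simp only [sem, ih]
  | congPlusR _ ih => simp only [sem, ih]
  | congMinusL _ ih => simp only [sem, ih]
  | congMinusR _ ih => simp only [sem, ih]

end Pat

theorem stmt3 (S : Sig) [Fintype S.C] (fv : ℕ → ℕ) (hfv : Function.Injective fv)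
    (p p' : Pat S) (hlin : p.Linear) (hstep : Pat.Step fv p p') :
    p.sem = p'.sem := by
  exact Pat.sem_step hstep
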